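/- Let 0 < ε ≤ ε₀ be real numbers. There exist constants 0 < m ≤ M, depending only on ε and ε₀, such that for all real numbers a, a', a'' in [ε/2, ε₀/2], every real d ≥ 0 satisfying cosh d = (cosh a + cosh a' · cosh a'')/(sinh a' · sinh a''), and every real b ≥ 0 satisfying cosh b = sinh a' · sinh d, one has m ≤ b ≤ M. -/

import Mathlib

lemma case_ii_key_ineq (p q r v t : ℝ) (hp : 1 ≤ p) (hq : 1 ≤ q) (hr : 1 ≤ r)
    (hv : 0 ≤ v) (hrv : v < r) (ht0 : 0 ≤ t) (htv : t * v ^ 2 ≤ 2) :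
    (1 + t) * v ^ 2 ≤ (p + q * r) ^ 2 - (q ^ 2 - 1) * v ^ 2 := by
  have h4 : 1 ≤ p + q * r - q * v := by nlinarith
  have h5 : 2 ≤ p + q * r + q * v := by nlinarith [mul_le_mul hq hr zero_le_one (by linarith : (0:ℝ) ≤ q), mul_nonneg (by linarith : (0:ℝ) ≤ q) hv]
  have h6 : (1:ℝ) * 2 ≤ (p + q * r - q * v) * (p + q * r + q * v) :=
    mul_le_mul h4 h5 (by norm_num) (by linarith)
  nlinarith [h6]

/-- Case (ii) of Lemma 3.3: in a hyperbolic pair of pants with boundary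
half-lengths `a, a', a''` in `[ε/2, ε₀/2]`, the half-length `b` of the
perpendicular arc returning to one boundary component is bounded above and
below by constants depending only on `ε` and `ε₀`. -/
theorem case_ii_bounds (ε ε₀ : ℝ) (hε : 0 < ε) (hεε₀ : ε ≤ ε₀) :
    ∃ m M : ℝ, 0 < m ∧ m ≤ M ∧
      ∀ a a' a'' d b : ℝ,
        a ∈ Set.Icc (ε / 2) (ε₀ / 2) →
        a' ∈ Set.Icc (ε / 2) (ε₀ / 2) →
        a'' ∈ Set.Icc (ε / 2) (ε₀ / 2) →
        0 ≤ d →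
        Real.cosh d = (Real.cosh a + Real.cosh a' * Real.cosh a'') /
          (Real.sinh a' * Real.sinh a'') →
        0 ≤ b →
        Real.cosh b = Real.sinh a' * Real.sinh d →
        m ≤ b ∧ b ≤ M := by
  have hε2 : 0 < ε / 2 := by linarith
  have hε02 : 0 < ε₀ / 2 := by linarith
  set s : ℝ := Real.sinh (ε₀ / 2) with hs
  have hs0 : 0 < s := Real.sinh_pos_iff.mpr hε02
  set C : ℝ := (Real.cosh (ε₀ / 2) + Real.cosh (ε₀ / 2) ^ 2) / Real.sinh (ε / 2) ^ 2
    with hCdef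
  set K : ℝ := Real.sqrt (1 + 2 / s ^ 2) with hKdef
  have hK1 : 1 < K := by
    rw [hKdef]
    have h0 : 0 < 2 / s ^ 2 := by positivity
    refine (Real.lt_sqrt (by norm_num)).mpr ?_
    rw [one_pow]; linarith
  refine ⟨Real.log K, max (s * C) (Real.log K), Real.log_pos hK1, le_max_right _ _, ?_⟩
  intro a a' a'' d b ha ha' ha'' hd0 hd hb0 hb
  obtain ⟨ha1, ha2⟩ := ha
  obtain ⟨ha'1, ha'2⟩ := ha'
  obtain ⟨ha''1, ha''2⟩ := ha''
  have hu : 0 < Real.sinh a' := Real.sinh_pos_iff.mpr (by linarith)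
  have hv : 0 < Real.sinh a'' := Real.sinh_pos_iff.mpr (by linarith)
  have hu_le : Real.sinh a' ≤ s := Real.sinh_le_sinh.mpr ha'2
  have hv_le : Real.sinh a'' ≤ s := Real.sinh_le_sinh.mpr ha''2
  have hden : Real.sinh a' * Real.sinh a'' ≠ 0 := by positivity
  rw [eq_div_iff hden] at hd
  have hsd0 : 0 ≤ Real.sinh d := Real.sinh_nonneg_iff.mpr hd0
  have hsdle : Real.sinh d ≤ Real.cosh d := by
    have h1 := Real.cosh_sub_sinh d
    have h2 := Real.exp_pos (-d)
    linarith
  -- upper bound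
  have hcaU : Real.cosh a ≤ Real.cosh (ε₀ / 2) := by
    rw [Real.cosh_le_cosh, abs_of_nonneg (by linarith), abs_of_nonneg hε02.le]
    exact ha2
  have hca'U : Real.cosh a' ≤ Real.cosh (ε₀ / 2) := by
    rw [Real.cosh_le_cosh, abs_of_nonneg (by linarith), abs_of_nonneg hε02.le]
    exact ha'2
  have hca''U : Real.cosh a'' ≤ Real.cosh (ε₀ / 2) := by
    rw [Real.cosh_le_cosh, abs_of_nonneg (by linarith), abs_of_nonneg hε02.le]
    exact ha''2
  have hsε : 0 < Real.sinh (ε / 2) := Real.sinh_pos_iff.mpr hε2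
  have hsu : Real.sinh (ε / 2) ≤ Real.sinh a' := Real.sinh_le_sinh.mpr ha'1
  have hsv : Real.sinh (ε / 2) ≤ Real.sinh a'' := Real.sinh_le_sinh.mpr ha''1
  have hcd_le : Real.cosh d ≤ C := by
    rw [hCdef, le_div_iff₀ (by positivity)]
    have h3 : Real.cosh a' * Real.cosh a'' ≤ Real.cosh (ε₀/2) * Real.cosh (ε₀/2) :=
      mul_le_mul hca'U hca''U (by positivity) (by positivity)
    have h4 : Real.sinh (ε/2) * Real.sinh (ε/2) ≤ Real.sinh a' * Real.sinh a'' :=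
      mul_le_mul hsu hsv hsε.le hu.le
    have h5 : Real.cosh d * (Real.sinh (ε/2) * Real.sinh (ε/2)) ≤
        Real.cosh d * (Real.sinh a' * Real.sinh a'') :=
      mul_le_mul_of_nonneg_left h4 (by positivity)
    calc Real.cosh d * Real.sinh (ε/2) ^ 2
        = Real.cosh d * (Real.sinh (ε/2) * Real.sinh (ε/2)) := by ring
      _ ≤ Real.cosh d * (Real.sinh a' * Real.sinh a'') := h5
      _ = Real.cosh a + Real.cosh a' * Real.cosh a'' := hd
      _ ≤ Real.cosh (ε₀/2) + Real.cosh (ε₀/2) ^ 2 := by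
          have := Real.one_le_cosh a; nlinarith [h3]
  have hcbU : Real.cosh b ≤ s * C := by
    calc Real.cosh b = Real.sinh a' * Real.sinh d := hb
      _ ≤ s * Real.sinh d := mul_le_mul_of_nonneg_right hu_le hsd0
      _ ≤ s * Real.cosh d := mul_le_mul_of_nonneg_left hsdle hs0.le
      _ ≤ s * C := mul_le_mul_of_nonneg_left hcd_le hs0.le
  have hbub : b ≤ max (s * C) (Real.log K) := by
    have hble : b ≤ Real.cosh b := by
      rcases eq_or_lt_of_le hb0 with h | h
      · rw [← h]; simp
      · have h1 : b < Real.sinh b := Real.self_lt_sinh_iff.mpr h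
        have h2 := Real.cosh_sub_sinh b
        have h3 := Real.exp_pos (-b)
        linarith
    exact le_max_of_le_left (by linarith)
  refine ⟨?_, hbub⟩
  -- lower bound
  have hch : Real.cosh d ^ 2 = Real.sinh d ^ 2 + 1 := Real.cosh_sq d
  have hsq : Real.cosh b ^ 2 * Real.sinh a'' ^ 2 =
      (Real.cosh a + Real.cosh a' * Real.cosh a'') ^ 2
        - Real.sinh a' ^ 2 * Real.sinh a'' ^ 2 := by
    linear_combination ((Real.cosh b + Real.sinh a' * Real.sinh d)
        * Real.sinh a'' ^ 2) * hb
      - (Real.sinh a' ^ 2 * Real.sinh a'' ^ 2) * hch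
      + (Real.cosh d * (Real.sinh a' * Real.sinh a'')
        + (Real.cosh a + Real.cosh a' * Real.cosh a'')) * hd
  have hu2 : Real.sinh a' ^ 2 = Real.cosh a' ^ 2 - 1 := Real.sinh_sq a'
  have hrv : Real.sinh a'' < Real.cosh a'' := by
    have h1 := Real.cosh_sub_sinh a''
    have h2 := Real.exp_pos (-a'')
    linarith
  have hdivle : 2 / s ^ 2 * Real.sinh a'' ^ 2 ≤ 2 := by
    have h1 : Real.sinh a'' ^ 2 ≤ s ^ 2 := pow_le_pow_left₀ hv.le hv_le 2
    calc 2 / s ^ 2 * Real.sinh a'' ^ 2 ≤ 2 / s ^ 2 * s ^ 2 :=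
          mul_le_mul_of_nonneg_left h1 (by positivity)
      _ = 2 := by field_simp
  have hKsq : (1 + 2 / s ^ 2) ≤ Real.cosh b ^ 2 := by
    rw [← mul_le_mul_iff_of_pos_right (show (0:ℝ) < Real.sinh a'' ^ 2 by positivity)]
    rw [hsq]
    calc (1 + 2 / s ^ 2) * Real.sinh a'' ^ 2
        ≤ (Real.cosh a + Real.cosh a' * Real.cosh a'') ^ 2
          - (Real.cosh a' ^ 2 - 1) * Real.sinh a'' ^ 2 :=
          case_ii_key_ineq _ _ _ _ _ (Real.one_le_cosh a) (Real.one_le_cosh a')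
            (Real.one_le_cosh a'') hv.le hrv (by positivity) hdivle
      _ = (Real.cosh a + Real.cosh a' * Real.cosh a'') ^ 2
          - Real.sinh a' ^ 2 * Real.sinh a'' ^ 2 := by rw [hu2]
  have hcb0 : (0:ℝ) ≤ Real.cosh b := by positivity
  have hKb : K ≤ Real.cosh b := by
    have h := Real.sqrt_le_sqrt hKsq
    rwa [Real.sqrt_sq hcb0, ← hKdef] at h
  have hcexp : Real.cosh b ≤ Real.exp b := by
    rw [Real.cosh_eq]
    have h := Real.exp_le_exp.mpr (neg_le_self hb0)
    linarith
  calc Real.log K ≤ Real.log (Real.cosh b) := Real.log_le_log (by linarith) hKb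
    _ ≤ Real.log (Real.exp b) := Real.log_le_log (by positivity) hcexp
    _ = b := Real.log_exp b
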